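/- arXiv:1708.00669 — 2 statements merged into one kernel-verified Lean document; each statement's English description precedes it below -/
import Mathlib

section
/- The set of extreme points of the binary parallel-timing NBTS polytope (binary two-party behaviours p satisfying positivity, normalisation, and the conditions that ∑_b p(a,b|x,y) is independent of both x and y, and ∑_a p(a,b|x,y) is independent of both x and y) consists of exactly 18 points: the 4 deterministic behaviours p(a,b|x,y) = 1 iff a = α and b = β for α, β ∈ {0,1}; the 8 PR-type behaviours p(a,b|x,y) = 1/2 if a ⊕ b = (x ⊕ γ)(y ⊕ δ) ⊕ ε (and 0 otherwise) for γ, δ, ε ∈ {0,1}; and the 6 linear-correlation behaviours p(a,b|x,y) = 1/2 if a ⊕ b = α·x ⊕ β·y ⊕ δ (and 0 otherwise) for α, β, δ ∈ {0,1} with (α,β) ≠ (0,0), where ⊕ denotes addition mod 2. -/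
open Finset

abbrev Beh := Fin 2 → Fin 2 → Fin 2 → Fin 2 → ℝ

def NBTS : Set Beh :=
  {p | (∀ a b x y, 0 ≤ p a b x y) ∧
       (∀ x y, ∑ a, ∑ b, p a b x y = 1) ∧
       (∀ a x x' y y', ∑ b, p a b x y = ∑ b, p a b x' y') ∧
       (∀ b x x' y y', ∑ a, p a b x y = ∑ a, p a b x' y')}

def Dfun (α β : Fin 2) : Beh := fun a b _ _ => if a = α ∧ b = β then (1:ℝ) else 0

noncomputable def Hfun (f : Fin 2 → Fin 2 → Fin 2) : Beh :=
  fun a b x y => if a + b = f x y then (1:ℝ)/2 else 0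

noncomputable def tbl (M N : ℝ) (t : Fin 2 → Fin 2 → ℝ) : Beh := fun a b x y =>
  if a = 0 then (if b = 0 then t x y else M - t x y)
  else (if b = 0 then N - t x y else 1 - M - N + t x y)

noncomputable def pM (p : Beh) : ℝ := p 0 0 0 0 + p 0 1 0 0
noncomputable def pN (p : Beh) : ℝ := p 0 0 0 0 + p 1 0 0 0
noncomputable def pt (p : Beh) (x y : Fin 2) : ℝ := p 0 0 x y

lemma fin2cases (z : Fin 2) : z = 0 ∨ z = 1 := by omega

lemma tbl_mem {M N : ℝ} {t : Fin 2 → Fin 2 → ℝ}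
    (h : ∀ x y, 0 ≤ t x y ∧ t x y ≤ M ∧ t x y ≤ N ∧ M + N ≤ 1 + t x y) :
    tbl M N t ∈ NBTS := by
  refine ⟨?_, ?_, ?_, ?_⟩
  · intro a b x y
    obtain ⟨h1, h2, h3, h4⟩ := h x y
    fin_cases a <;> fin_cases b <;> simp [tbl] <;> linarith
  · intro x y
    simp [tbl, Fin.sum_univ_two]
    try ring
  · intro a x x' y y'
    fin_cases a <;> simp [tbl, Fin.sum_univ_two] <;> try ring
  · intro b x x' y y'
    fin_cases b <;> simp [tbl, Fin.sum_univ_two] <;> try ring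

lemma rep {p : Beh} (hp : p ∈ NBTS) : p = tbl (pM p) (pN p) (pt p) := by
  obtain ⟨hpos, hnorm, hA, hB⟩ := hp
  have hM : ∀ x y, p 0 0 x y + p 0 1 x y = pM p := by
    intro x y
    have := hA 0 x 0 y 0
    simpa [Fin.sum_univ_two, pM] using this
  have hN : ∀ x y, p 0 0 x y + p 1 0 x y = pN p := by
    intro x y
    have := hB 0 x 0 y 0
    simpa [Fin.sum_univ_two, pN] using this
  have hS : ∀ x y, p 0 0 x y + p 0 1 x y + (p 1 0 x y + p 1 1 x y) = 1 := by
    intro x y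
    have := hnorm x y
    simpa [Fin.sum_univ_two] using this
  funext a b x y
  fin_cases a <;> fin_cases b <;> simp [tbl, pt] <;>
    linarith [hM x y, hN x y, hS x y]

lemma bounds {p : Beh} (hp : p ∈ NBTS) (x y : Fin 2) :
    0 ≤ pt p x y ∧ pt p x y ≤ pM p ∧ pt p x y ≤ pN p ∧ pM p + pN p ≤ 1 + pt p x y := by
  have h := rep hp
  obtain ⟨hpos, -, -, -⟩ := hp
  have h00 := hpos 0 0 x y
  have h01 := hpos 0 1 x y
  have h10 := hpos 1 0 x y
  have h11 := hpos 1 1 x y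
  rw [h] at h01 h10 h11
  simp [tbl] at h01 h10 h11
  exact ⟨h00, by linarith, by linarith, by linarith⟩

lemma perturb {p : Beh} (hp : p ∈ NBTS.extremePoints ℝ) {M N dM dN : ℝ}
    {t dt : Fin 2 → Fin 2 → ℝ} (hrep : p = tbl M N t)
    (h1 : tbl (M+dM) (N+dN) (fun x y => t x y + dt x y) ∈ NBTS)
    (h2 : tbl (M-dM) (N-dN) (fun x y => t x y - dt x y) ∈ NBTS) :
    dM = 0 ∧ dN = 0 ∧ ∀ x y, dt x y = 0 := by
  obtain ⟨hmem, hext⟩ := hp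
  have hseg : p ∈ openSegment ℝ
      (tbl (M+dM) (N+dN) fun x y => t x y + dt x y)
      (tbl (M-dM) (N-dN) fun x y => t x y - dt x y) := by
    refine ⟨1/2, 1/2, by norm_num, by norm_num, by norm_num, ?_⟩
    funext a b x y
    simp only [Pi.add_apply, Pi.smul_apply, smul_eq_mul, hrep]
    fin_cases a <;> fin_cases b <;> simp [tbl] <;> ring
  have hq := hext h1 h2 hseg
  rw [hrep] at hq
  have edt : ∀ x y, dt x y = 0 := by
    intro x y
    have := congrFun (congrFun (congrFun (congrFun hq 0) 0) x) y
    simp [tbl] at this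
    linarith
  refine ⟨?_, ?_, edt⟩
  · have := congrFun (congrFun (congrFun (congrFun hq 0) 1) 0) 0
    simp [tbl] at this
    have h0 := edt 0 0
    linarith
  · have := congrFun (congrFun (congrFun (congrFun hq 1) 0) 0) 0
    simp [tbl] at this
    have h0 := edt 0 0
    linarith

lemma D_mem (α β : Fin 2) : Dfun α β ∈ NBTS := by
  refine ⟨?_, ?_, ?_, ?_⟩
  · intro a b x y
    simp only [Dfun]
    split <;> norm_num
  · intro x y
    fin_cases α <;> fin_cases β <;> simp [Dfun, Fin.sum_univ_two] <;> decide
  · intro a x x' y y'; rfl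
  · intro b x x' y y'; rfl

lemma eqD {s : Beh} (hs : s ∈ NBTS) (α β : Fin 2)
    (h0 : ∀ a b x y, ¬(a = α ∧ b = β) → s a b x y = 0) : s = Dfun α β := by
  obtain ⟨hpos, hnorm, -, -⟩ := hs
  funext a b x y
  have hn := hnorm x y
  rw [Fin.sum_univ_two, Fin.sum_univ_two, Fin.sum_univ_two] at hn
  fin_cases α <;> fin_cases β <;> fin_cases a <;> fin_cases b <;>
    simp only [Dfun, Fin.isValue] <;> norm_num <;>
    first
      | exact h0 _ _ x y (by decide)
      | linarith [h0 0 1 x y (by decide), h0 1 0 x y (by decide), h0 1 1 x y (by decide)]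
      | linarith [h0 0 0 x y (by decide), h0 1 0 x y (by decide), h0 1 1 x y (by decide)]
      | linarith [h0 0 0 x y (by decide), h0 0 1 x y (by decide), h0 1 1 x y (by decide)]
      | linarith [h0 0 0 x y (by decide), h0 0 1 x y (by decide), h0 1 0 x y (by decide)]

lemma both_zero {qc rc u v : ℝ} (hu : 0 < u) (hv : 0 < v) (hqc : 0 ≤ qc) (hrc : 0 ≤ rc)
    (h : u * qc + v * rc = 0) : qc = 0 ∧ rc = 0 := by
  have h1 : u * qc = 0 := by nlinarith [mul_nonneg hu.le hqc, mul_nonneg hv.le hrc]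
  have h2 : v * rc = 0 := by nlinarith [mul_nonneg hu.le hqc, mul_nonneg hv.le hrc]
  constructor
  · rcases mul_eq_zero.1 h1 with h | h
    · exact absurd h hu.ne'
    · exact h
  · rcases mul_eq_zero.1 h2 with h | h
    · exact absurd h hv.ne'
    · exact h

lemma D_extreme (α β : Fin 2) : Dfun α β ∈ NBTS.extremePoints ℝ := by
  refine ⟨D_mem α β, ?_⟩
  intro q hq r hr hseg
  obtain ⟨u, v, hu, hv, huv, hsum⟩ := hseg
  have hc : ∀ a b x y, u * q a b x y + v * r a b x y = Dfun α β a b x y := by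
    intro a b x y
    have := congrFun (congrFun (congrFun (congrFun hsum a) b) x) y
    simpa using this
  have hz : ∀ a b x y, ¬(a = α ∧ b = β) → q a b x y = 0 ∧ r a b x y = 0 := by
    intro a b x y h
    have h1 := hc a b x y
    rw [show Dfun α β a b x y = 0 by simp [Dfun, h]] at h1
    exact both_zero hu hv (hq.1 a b x y) (hr.1 a b x y) h1
  exact eqD hq α β (fun a b x y h => (hz a b x y h).1)

lemma H_as_tbl (f : Fin 2 → Fin 2 → Fin 2) :
    Hfun f = tbl (1/2) (1/2) (fun x y => if f x y = 0 then 1/2 else 0) := by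
  funext a b x y
  rcases fin2cases (f x y) with h | h <;>
    fin_cases a <;> fin_cases b <;> simp [Hfun, tbl, h] <;> norm_num

lemma H_mem (f : Fin 2 → Fin 2 → Fin 2) : Hfun f ∈ NBTS := by
  rw [H_as_tbl]
  apply tbl_mem
  intro x y
  by_cases h : f x y = 0 <;> simp [h] <;> norm_num

lemma eqH {s : Beh} (hs : s ∈ NBTS) (f : Fin 2 → Fin 2 → Fin 2)
    (x0 y0 x1 y1 : Fin 2) (h0 : f x0 y0 = 0) (h1 : f x1 y1 = 1)
    (hz : ∀ a b x y, a + b ≠ f x y → s a b x y = 0) : s = Hfun f := by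
  have hrep := rep hs
  have E : ∀ a b x y, s a b x y = tbl (pM s) (pN s) (pt s) a b x y :=
    fun a b x y => congrFun (congrFun (congrFun (congrFun hrep a) b) x) y
  -- at (x1,y1): entries (0,0) and (1,1) vanish
  have e1 : pt s x1 y1 = 0 := hz 0 0 x1 y1 (by rw [h1]; decide)
  have e2 : s 1 1 x1 y1 = 0 := hz 1 1 x1 y1 (by rw [h1]; decide)
  have e2' : 1 - pM s - pN s + pt s x1 y1 = 0 := by
    have := E 1 1 x1 y1; simp [tbl] at this; linarith [e2]
  have hMN : pM s + pN s = 1 := by linarith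
  -- at (x0,y0): entries (0,1) and (1,0) vanish
  have e3 : s 0 1 x0 y0 = 0 := hz 0 1 x0 y0 (by rw [h0]; decide)
  have e4 : s 1 0 x0 y0 = 0 := hz 1 0 x0 y0 (by rw [h0]; decide)
  have e3' : pM s - pt s x0 y0 = 0 := by
    have := E 0 1 x0 y0; simp [tbl] at this; linarith [e3]
  have e4' : pN s - pt s x0 y0 = 0 := by
    have := E 1 0 x0 y0; simp [tbl] at this; linarith [e4]
  have hM : pM s = 1/2 := by linarith
  have hN : pN s = 1/2 := by linarith
  have ht : ∀ x y, pt s x y = (if f x y = 0 then 1/2 else 0) := by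
    intro x y
    rcases fin2cases (f x y) with h | h
    · have e5 : s 0 1 x y = 0 := hz 0 1 x y (by rw [h]; decide)
      have := E 0 1 x y; simp [tbl] at this
      rw [if_pos h]; linarith
    · have e5 : s 0 0 x y = 0 := hz 0 0 x y (by rw [h]; decide)
      rw [if_neg (by rw [h]; decide)]
      have := E 0 0 x y; simp [tbl] at this; linarith
  have hteq : pt s = fun x y => if f x y = 0 then 1/2 else 0 :=
    funext fun x => funext fun y => ht x y
  rw [hrep, hM, hN, hteq, H_as_tbl]

lemma H_extreme (f : Fin 2 → Fin 2 → Fin 2) (x0 y0 x1 y1 : Fin 2)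
    (h0 : f x0 y0 = 0) (h1 : f x1 y1 = 1) : Hfun f ∈ NBTS.extremePoints ℝ := by
  refine ⟨H_mem f, ?_⟩
  intro q hq r hr hseg
  obtain ⟨u, v, hu, hv, huv, hsum⟩ := hseg
  have hc : ∀ a b x y, u * q a b x y + v * r a b x y = Hfun f a b x y := by
    intro a b x y
    have := congrFun (congrFun (congrFun (congrFun hsum a) b) x) y
    simpa using this
  have hz : ∀ a b x y, a + b ≠ f x y → q a b x y = 0 ∧ r a b x y = 0 := by
    intro a b x y h
    have h1' := hc a b x y
    rw [show Hfun f a b x y = 0 by simp [Hfun, h]] at h1'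
    exact both_zero hu hv (hq.1 a b x y) (hr.1 a b x y) h1'
  exact eqH hq f x0 y0 x1 y1 h0 h1 (fun a b x y h => (hz a b x y h).1)

lemma extreme_sub {p : Beh} (hp : p ∈ NBTS.extremePoints ℝ) :
    (∃ α β, p = Dfun α β) ∨ ∃ f, (¬ ∀ x y, f x y = f 0 0) ∧ p = Hfun f := by
  classical
  have hpS : p ∈ NBTS := hp.1
  have hrep := rep hpS
  -- Step (i): every table has a zero entry
  have hz : ∀ x y, pt p x y = 0 ∨ pM p - pt p x y = 0 ∨ pN p - pt p x y = 0 ∨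
      1 - pM p - pN p + pt p x y = 0 := by
    intro x y
    by_contra hcon
    push_neg at hcon
    obtain ⟨c1, c2, c3, c4⟩ := hcon
    obtain ⟨b1, b2, b3, b4⟩ := bounds hpS x y
    set ε := min (pt p x y) (min (pM p - pt p x y)
      (min (pN p - pt p x y) (1 - pM p - pN p + pt p x y))) with hεdef
    have hε1 : ε ≤ pt p x y := min_le_left _ _
    have hε2 : ε ≤ pM p - pt p x y := le_trans (min_le_right _ _) (min_le_left _ _)
    have hε3 : ε ≤ pN p - pt p x y :=
      le_trans (min_le_right _ _) (le_trans (min_le_right _ _) (min_le_left _ _))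
    have hε4 : ε ≤ 1 - pM p - pN p + pt p x y :=
      le_trans (min_le_right _ _) (le_trans (min_le_right _ _) (min_le_right _ _))
    have hεpos : 0 < ε := by
      refine lt_min (lt_of_le_of_ne b1 (Ne.symm c1)) (lt_min ?_ (lt_min ?_ ?_))
      · exact lt_of_le_of_ne (by linarith) (Ne.symm c2)
      · exact lt_of_le_of_ne (by linarith) (Ne.symm c3)
      · exact lt_of_le_of_ne (by linarith) (Ne.symm c4)
    set d : Fin 2 → Fin 2 → ℝ := fun x' y' => if x' = x ∧ y' = y then ε else 0 with hd
    have feas1 : tbl (pM p + 0) (pN p + 0) (fun x' y' => pt p x' y' + d x' y') ∈ NBTS := by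
      apply tbl_mem
      intro x' y'
      by_cases hxy : x' = x ∧ y' = y
      · obtain ⟨rfl, rfl⟩ := hxy
        simp only [hd, if_pos (⟨rfl, rfl⟩ : x' = x' ∧ y' = y')]
        refine ⟨by linarith, by linarith, by linarith, by linarith⟩
      · obtain ⟨e1, e2, e3, e4⟩ := bounds hpS x' y'
        simp only [hd, if_neg hxy]
        refine ⟨by linarith, by linarith, by linarith, by linarith⟩
    have feas2 : tbl (pM p - 0) (pN p - 0) (fun x' y' => pt p x' y' - d x' y') ∈ NBTS := by
      apply tbl_mem
      intro x' y'
      by_cases hxy : x' = x ∧ y' = y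
      · obtain ⟨rfl, rfl⟩ := hxy
        simp only [hd, if_pos (⟨rfl, rfl⟩ : x' = x' ∧ y' = y')]
        refine ⟨by linarith, by linarith, by linarith, by linarith⟩
      · obtain ⟨e1, e2, e3, e4⟩ := bounds hpS x' y'
        simp only [hd, if_neg hxy]
        refine ⟨by linarith, by linarith, by linarith, by linarith⟩
    have key := perturb hp hrep feas1 feas2
    have := key.2.2 x y
    rw [hd] at this
    simp only [if_pos (⟨rfl, rfl⟩ : x = x ∧ y = y)] at this
    exact absurd this (ne_of_gt hεpos)
  -- boundary case M = 0
  by_cases hM0 : pM p = 0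
  · have ht0 : ∀ x y, pt p x y = 0 := by
      intro x y
      obtain ⟨b1, b2, b3, b4⟩ := bounds hpS x y
      linarith
    by_cases hN0 : pN p = 0
    · refine Or.inl ⟨1, 1, ?_⟩
      rw [hrep]
      funext a b x y
      fin_cases a <;> fin_cases b <;> simp [tbl, Dfun, hM0, hN0, ht0]
    by_cases hN1 : pN p = 1
    · refine Or.inl ⟨1, 0, ?_⟩
      rw [hrep]
      funext a b x y
      fin_cases a <;> fin_cases b <;> simp [tbl, Dfun, hM0, hN1, ht0]
    · exfalso
      obtain ⟨b1, b2, b3, b4⟩ := bounds hpS 0 0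
      have hNlb : 0 < pN p := lt_of_le_of_ne (by linarith [ht0 0 0]) (Ne.symm hN0)
      have hNub : pN p < 1 := lt_of_le_of_ne (by linarith [ht0 0 0]) hN1
      set ε := min (pN p) (1 - pN p) with hεdef
      have hε1 : ε ≤ pN p := min_le_left _ _
      have hε2 : ε ≤ 1 - pN p := min_le_right _ _
      have hεpos : 0 < ε := lt_min hNlb (by linarith)
      have feas1 : tbl (pM p + 0) (pN p + ε) (fun x y => pt p x y + 0) ∈ NBTS := by
        apply tbl_mem
        intro x y
        rw [ht0 x y]
        refine ⟨by linarith, by linarith [hM0], by linarith, by linarith [hM0]⟩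
      have feas2 : tbl (pM p - 0) (pN p - ε) (fun x y => pt p x y - 0) ∈ NBTS := by
        apply tbl_mem
        intro x y
        rw [ht0 x y]
        refine ⟨by linarith, by linarith [hM0], by linarith, by linarith [hM0]⟩
      have key := perturb hp hrep feas1 feas2
      exact absurd key.2.1 (ne_of_gt hεpos)
  -- boundary case M = 1
  by_cases hM1 : pM p = 1
  · have htN : ∀ x y, pt p x y = pN p := by
      intro x y
      obtain ⟨b1, b2, b3, b4⟩ := bounds hpS x y
      linarith
    by_cases hN0 : pN p = 0
    · refine Or.inl ⟨0, 1, ?_⟩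
      rw [hrep]
      funext a b x y
      fin_cases a <;> fin_cases b <;> simp [tbl, Dfun, hM1, hN0, htN] <;> norm_num [hN0]
    by_cases hN1 : pN p = 1
    · refine Or.inl ⟨0, 0, ?_⟩
      rw [hrep]
      funext a b x y
      fin_cases a <;> fin_cases b <;> simp [tbl, Dfun, hM1, hN1, htN] <;> norm_num [hN1]
    · exfalso
      obtain ⟨b1, b2, b3, b4⟩ := bounds hpS 0 0
      have hNlb : 0 < pN p := lt_of_le_of_ne (by linarith [htN 0 0]) (Ne.symm hN0)
      have hNub : pN p < 1 := lt_of_le_of_ne (by linarith [htN 0 0]) hN1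
      set ε := min (pN p) (1 - pN p) with hεdef
      have hε1 : ε ≤ pN p := min_le_left _ _
      have hε2 : ε ≤ 1 - pN p := min_le_right _ _
      have hεpos : 0 < ε := lt_min hNlb (by linarith)
      have feas1 : tbl (pM p + 0) (pN p + ε) (fun x y => pt p x y + ε) ∈ NBTS := by
        apply tbl_mem
        intro x y
        rw [htN x y]
        refine ⟨by linarith, by linarith [hM1], by linarith, by linarith [hM1]⟩
      have feas2 : tbl (pM p - 0) (pN p - ε) (fun x y => pt p x y - ε) ∈ NBTS := by
        apply tbl_mem
        intro x y
        rw [htN x y]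
        refine ⟨by linarith, by linarith [hM1], by linarith, by linarith [hM1]⟩
      have key := perturb hp hrep feas1 feas2
      exact absurd key.2.1 (ne_of_gt hεpos)
  -- now 0 < M < 1
  have hMlb : 0 < pM p := by
    obtain ⟨b1, b2, b3, b4⟩ := bounds hpS 0 0
    exact lt_of_le_of_ne (by linarith) (Ne.symm hM0)
  have hMub : pM p < 1 := by
    obtain ⟨b1, b2, b3, b4⟩ := bounds hpS 0 0
    exact lt_of_le_of_ne (by linarith) hM1
  -- boundary case N = 0 (with M interior): impossible
  by_cases hN0 : pN p = 0
  · exfalso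
    have ht0 : ∀ x y, pt p x y = 0 := by
      intro x y
      obtain ⟨b1, b2, b3, b4⟩ := bounds hpS x y
      linarith
    set ε := min (pM p) (1 - pM p) with hεdef
    have hε1 : ε ≤ pM p := min_le_left _ _
    have hε2 : ε ≤ 1 - pM p := min_le_right _ _
    have hεpos : 0 < ε := lt_min hMlb (by linarith)
    have feas1 : tbl (pM p + ε) (pN p + 0) (fun x y => pt p x y + 0) ∈ NBTS := by
      apply tbl_mem
      intro x y
      rw [ht0 x y]
      refine ⟨by linarith, by linarith, by linarith [hN0], by linarith [hN0]⟩
    have feas2 : tbl (pM p - ε) (pN p - 0) (fun x y => pt p x y - 0) ∈ NBTS := by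
      apply tbl_mem
      intro x y
      rw [ht0 x y]
      refine ⟨by linarith, by linarith, by linarith [hN0], by linarith [hN0]⟩
    have key := perturb hp hrep feas1 feas2
    exact absurd key.1 (ne_of_gt hεpos)
  -- boundary case N = 1 (with M interior): impossible
  by_cases hN1 : pN p = 1
  · exfalso
    have htM : ∀ x y, pt p x y = pM p := by
      intro x y
      obtain ⟨b1, b2, b3, b4⟩ := bounds hpS x y
      linarith
    set ε := min (pM p) (1 - pM p) with hεdef
    have hε1 : ε ≤ pM p := min_le_left _ _
    have hε2 : ε ≤ 1 - pM p := min_le_right _ _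
    have hεpos : 0 < ε := lt_min hMlb (by linarith)
    have feas1 : tbl (pM p + ε) (pN p + 0) (fun x y => pt p x y + ε) ∈ NBTS := by
      apply tbl_mem
      intro x y
      rw [htM x y]
      refine ⟨by linarith, by linarith, by linarith [hN1], by linarith [hN1]⟩
    have feas2 : tbl (pM p - ε) (pN p - 0) (fun x y => pt p x y - ε) ∈ NBTS := by
      apply tbl_mem
      intro x y
      rw [htM x y]
      refine ⟨by linarith, by linarith, by linarith [hN1], by linarith [hN1]⟩
    have key := perturb hp hrep feas1 feas2
    exact absurd key.1 (ne_of_gt hεpos)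
  have hNlb : 0 < pN p := by
    obtain ⟨b1, b2, b3, b4⟩ := bounds hpS 0 0
    exact lt_of_le_of_ne (by linarith) (Ne.symm hN0)
  have hNub : pN p < 1 := by
    obtain ⟨b1, b2, b3, b4⟩ := bounds hpS 0 0
    exact lt_of_le_of_ne (by linarith) hN1
  -- Phase 1 : ¬ (M + N < 1)
  have hP1 : ¬ pM p + pN p < 1 := by
    intro hlt
    set ε := min (pM p) (min (pN p) ((1 - pM p - pN p)/2)) with hεdef
    have hε1 : ε ≤ pM p := min_le_left _ _
    have hε2 : ε ≤ pN p := le_trans (min_le_right _ _) (min_le_left _ _)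
    have hε3 : ε ≤ (1 - pM p - pN p)/2 := le_trans (min_le_right _ _) (min_le_right _ _)
    have hεpos : 0 < ε := lt_min hMlb (lt_min hNlb (by linarith))
    set d : Fin 2 → Fin 2 → ℝ := fun x y => if pt p x y = 0 then 0 else ε with hd
    have feas1 : tbl (pM p + ε) (pN p + ε) (fun x y => pt p x y + d x y) ∈ NBTS := by
      apply tbl_mem
      intro x y
      obtain ⟨b1, b2, b3, b4⟩ := bounds hpS x y
      by_cases hx : pt p x y = 0
      · simp only [hd, if_pos hx]
        refine ⟨by linarith, by linarith, by linarith, by linarith⟩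
      · simp only [hd, if_neg hx]
        refine ⟨by linarith, by linarith, by linarith, by linarith⟩
    have feas2 : tbl (pM p - ε) (pN p - ε) (fun x y => pt p x y - d x y) ∈ NBTS := by
      apply tbl_mem
      intro x y
      obtain ⟨b1, b2, b3, b4⟩ := bounds hpS x y
      by_cases hx : pt p x y = 0
      · simp only [hd, if_pos hx]
        refine ⟨by linarith, by linarith, by linarith, by linarith⟩
      · have htval : pM p - pt p x y = 0 ∨ pN p - pt p x y = 0 := by
          rcases hz x y with h | h | h | h
          · exact absurd h hx
          · exact Or.inl h
          · exact Or.inr h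
          · exact absurd h (by intro hh; linarith)
        simp only [hd, if_neg hx]
        rcases htval with h | h
        · refine ⟨by linarith, by linarith, by linarith, by linarith⟩
        · refine ⟨by linarith, by linarith, by linarith, by linarith⟩
    have key := perturb hp hrep feas1 feas2
    exact absurd key.1 (ne_of_gt hεpos)
  -- Phase 2 : ¬ (1 < M + N)
  have hP2 : ¬ 1 < pM p + pN p := by
    intro hlt
    set ε := min (1 - pM p) (min (1 - pN p) ((pM p + pN p - 1)/2)) with hεdef
    have hε1 : ε ≤ 1 - pM p := min_le_left _ _
    have hε2 : ε ≤ 1 - pN p := le_trans (min_le_right _ _) (min_le_left _ _)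
    have hε3 : ε ≤ (pM p + pN p - 1)/2 := le_trans (min_le_right _ _) (min_le_right _ _)
    have hεpos : 0 < ε := lt_min (by linarith) (lt_min (by linarith) (by linarith))
    set d : Fin 2 → Fin 2 → ℝ := fun x y =>
      if pM p - pt p x y = 0 ∨ pN p - pt p x y = 0 then ε else 2*ε with hd
    have hcase : ∀ x y, (pM p - pt p x y = 0 ∨ pN p - pt p x y = 0) ∨
        1 - pM p - pN p + pt p x y = 0 := by
      intro x y
      obtain ⟨b1, b2, b3, b4⟩ := bounds hpS x y
      rcases hz x y with h | h | h | h
      · exact absurd h (by intro hh; linarith)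
      · exact Or.inl (Or.inl h)
      · exact Or.inl (Or.inr h)
      · exact Or.inr h
    have feas1 : tbl (pM p + ε) (pN p + ε) (fun x y => pt p x y + d x y) ∈ NBTS := by
      apply tbl_mem
      intro x y
      obtain ⟨b1, b2, b3, b4⟩ := bounds hpS x y
      by_cases hx : pM p - pt p x y = 0 ∨ pN p - pt p x y = 0
      · simp only [hd, if_pos hx]
        rcases hx with h | h
        · refine ⟨by linarith, by linarith, by linarith, by linarith⟩
        · refine ⟨by linarith, by linarith, by linarith, by linarith⟩
      · have h11 : 1 - pM p - pN p + pt p x y = 0 := (hcase x y).resolve_left hx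
        have hne : ¬ pM p - pt p x y = 0 := fun h => hx (Or.inl h)
        have hne2 : ¬ pN p - pt p x y = 0 := fun h => hx (Or.inr h)
        simp only [hd, if_neg hx]
        refine ⟨by linarith, by linarith, by linarith, by linarith⟩
    have feas2 : tbl (pM p - ε) (pN p - ε) (fun x y => pt p x y - d x y) ∈ NBTS := by
      apply tbl_mem
      intro x y
      obtain ⟨b1, b2, b3, b4⟩ := bounds hpS x y
      by_cases hx : pM p - pt p x y = 0 ∨ pN p - pt p x y = 0
      · simp only [hd, if_pos hx]
        rcases hx with h | h
        · refine ⟨by linarith, by linarith, by linarith, by linarith⟩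
        · refine ⟨by linarith, by linarith, by linarith, by linarith⟩
      · have h11 : 1 - pM p - pN p + pt p x y = 0 := (hcase x y).resolve_left hx
        simp only [hd, if_neg hx]
        refine ⟨by linarith, by linarith, by linarith, by linarith⟩
    have key := perturb hp hrep feas1 feas2
    exact absurd key.1 (ne_of_gt hεpos)
  have hMN : pM p + pN p = 1 := by
    rcases lt_trichotomy (pM p + pN p) 1 with h | h | h
    · exact absurd h hP1
    · exact h
    · exact absurd h hP2
  -- Phase 3 : M = 1/2
  have hMhalf : pM p = 1/2 := by
    by_contra hne
    rcases lt_or_gt_of_ne hne with hlt | hgt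
    · -- M < 1/2
      set ε := min (pM p) ((1 - 2*pM p)/2) with hεdef
      have hε1 : ε ≤ pM p := min_le_left _ _
      have hε2 : ε ≤ (1 - 2*pM p)/2 := min_le_right _ _
      have hεpos : 0 < ε := lt_min hMlb (by linarith)
      have hcase : ∀ x y, pt p x y = 0 ∨ pM p - pt p x y = 0 := by
        intro x y
        obtain ⟨b1, b2, b3, b4⟩ := bounds hpS x y
        rcases hz x y with h | h | h | h
        · exact Or.inl h
        · exact Or.inr h
        · exact absurd h (by intro hh; linarith)
        · exact Or.inl (by linarith)
      set d : Fin 2 → Fin 2 → ℝ := fun x y => if pt p x y = 0 then 0 else ε with hd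
      have feas1 : tbl (pM p + ε) (pN p + -ε) (fun x y => pt p x y + d x y) ∈ NBTS := by
        apply tbl_mem
        intro x y
        obtain ⟨b1, b2, b3, b4⟩ := bounds hpS x y
        by_cases hx : pt p x y = 0
        · simp only [hd, if_pos hx]
          refine ⟨by linarith, by linarith, by linarith, by linarith⟩
        · have h2 : pM p - pt p x y = 0 := (hcase x y).resolve_left hx
          simp only [hd, if_neg hx]
          refine ⟨by linarith, by linarith, by linarith, by linarith⟩
      have feas2 : tbl (pM p - ε) (pN p - -ε) (fun x y => pt p x y - d x y) ∈ NBTS := by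
        apply tbl_mem
        intro x y
        obtain ⟨b1, b2, b3, b4⟩ := bounds hpS x y
        by_cases hx : pt p x y = 0
        · simp only [hd, if_pos hx]
          refine ⟨by linarith, by linarith, by linarith, by linarith⟩
        · have h2 : pM p - pt p x y = 0 := (hcase x y).resolve_left hx
          simp only [hd, if_neg hx]
          refine ⟨by linarith, by linarith, by linarith, by linarith⟩
      have key := perturb hp hrep feas1 feas2
      exact absurd key.1 (ne_of_gt hεpos)
    · -- M > 1/2
      set ε := min (1 - pM p) ((2*pM p - 1)/2) with hεdef
      have hε1 : ε ≤ 1 - pM p := min_le_left _ _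
      have hε2 : ε ≤ (2*pM p - 1)/2 := min_le_right _ _
      have hεpos : 0 < ε := lt_min (by linarith) (by linarith)
      have hcase : ∀ x y, pt p x y = 0 ∨ pN p - pt p x y = 0 := by
        intro x y
        obtain ⟨b1, b2, b3, b4⟩ := bounds hpS x y
        rcases hz x y with h | h | h | h
        · exact Or.inl h
        · exact absurd h (by intro hh; linarith)
        · exact Or.inr h
        · exact Or.inl (by linarith)
      set d : Fin 2 → Fin 2 → ℝ := fun x y => if pt p x y = 0 then 0 else -ε with hd
      have feas1 : tbl (pM p + ε) (pN p + -ε) (fun x y => pt p x y + d x y) ∈ NBTS := by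
        apply tbl_mem
        intro x y
        obtain ⟨b1, b2, b3, b4⟩ := bounds hpS x y
        by_cases hx : pt p x y = 0
        · simp only [hd, if_pos hx]
          refine ⟨by linarith, by linarith, by linarith, by linarith⟩
        · have h2 : pN p - pt p x y = 0 := (hcase x y).resolve_left hx
          simp only [hd, if_neg hx]
          refine ⟨by linarith, by linarith, by linarith, by linarith⟩
      have feas2 : tbl (pM p - ε) (pN p - -ε) (fun x y => pt p x y - d x y) ∈ NBTS := by
        apply tbl_mem
        intro x y
        obtain ⟨b1, b2, b3, b4⟩ := bounds hpS x y
        by_cases hx : pt p x y = 0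
        · simp only [hd, if_pos hx]
          refine ⟨by linarith, by linarith, by linarith, by linarith⟩
        · have h2 : pN p - pt p x y = 0 := (hcase x y).resolve_left hx
          simp only [hd, if_neg hx]
          refine ⟨by linarith, by linarith, by linarith, by linarith⟩
      have key := perturb hp hrep feas1 feas2
      exact absurd key.1 (ne_of_gt hεpos)
  have hNhalf : pN p = 1/2 := by linarith
  -- Phase 4 : conclusion
  have hpat : ∀ x y, pt p x y = 0 ∨ pt p x y = 1/2 := by
    intro x y
    rcases hz x y with h | h | h | h
    · exact Or.inl h
    · exact Or.inr (by linarith [hMhalf])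
    · exact Or.inr (by linarith [hNhalf])
    · exact Or.inl (by linarith [hMhalf, hNhalf])
  set f : Fin 2 → Fin 2 → Fin 2 := fun x y => if pt p x y = 0 then 1 else 0 with hf
  have hpH : p = Hfun f := by
    have hteq : pt p = fun x y => if f x y = 0 then 1/2 else 0 := by
      funext x y
      rcases hpat x y with h | h
      · rw [h]
        simp only [hf, if_pos h]
        norm_num
      · rw [h]
        have hne : ¬ pt p x y = 0 := by rw [h]; norm_num
        simp only [hf, if_neg hne]
        norm_num
    rw [hrep, hMhalf, hNhalf, hteq, H_as_tbl]
  by_cases hconst : ∀ x y, f x y = f 0 0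
  · exfalso
    rcases fin2cases (f 0 0) with h00 | h00
    · -- all t = 1/2
      have hth : ∀ x y, pt p x y = 1/2 := by
        intro x y
        have := hconst x y
        rw [h00] at this
        rcases hpat x y with h | h
        · exfalso
          simp only [hf, if_pos h] at this
          exact absurd this (by decide)
        · exact h
      have feas1 : tbl (pM p + 1/2) (pN p + 1/2) (fun x y => pt p x y + 1/2) ∈ NBTS := by
        apply tbl_mem
        intro x y
        rw [hth x y, hMhalf, hNhalf]
        norm_num
      have feas2 : tbl (pM p - 1/2) (pN p - 1/2) (fun x y => pt p x y - 1/2) ∈ NBTS := by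
        apply tbl_mem
        intro x y
        rw [hth x y, hMhalf, hNhalf]
        norm_num
      have key := perturb hp hrep feas1 feas2
      norm_num at key
    · -- all t = 0
      have hth : ∀ x y, pt p x y = 0 := by
        intro x y
        have := hconst x y
        rw [h00] at this
        rcases hpat x y with h | h
        · exact h
        · exfalso
          have hne : ¬ pt p x y = 0 := by rw [h]; norm_num
          simp only [hf, if_neg hne] at this
          exact absurd this (by decide)
      have feas1 : tbl (pM p + 1/2) (pN p + -(1/2)) (fun x y => pt p x y + 0) ∈ NBTS := by
        apply tbl_mem
        intro x y
        rw [hth x y, hMhalf, hNhalf]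
        norm_num
      have feas2 : tbl (pM p - 1/2) (pN p - -(1/2)) (fun x y => pt p x y - 0) ∈ NBTS := by
        apply tbl_mem
        intro x y
        rw [hth x y, hMhalf, hNhalf]
        norm_num
      have key := perturb hp hrep feas1 feas2
      norm_num at key
  · exact Or.inr ⟨f, hconst, hpH⟩

lemma classify (f : Fin 2 → Fin 2 → Fin 2) :
    (∀ x y, f x y = f 0 0) ∨
    (∃ γ δ ε : Fin 2, f = fun x y => (x + γ) * (y + δ) + ε) ∨
    (∃ α β δ : Fin 2, ¬(α = 0 ∧ β = 0) ∧ f = fun x y => α * x + β * y + δ) := by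
  revert f; decide

lemma PR_nonconst (γ δ ε : Fin 2) :
    ¬ ∀ x y : Fin 2, (fun x y => (x + γ) * (y + δ) + ε) x y
      = (fun x y => (x + γ) * (y + δ) + ε) 0 0 := by
  revert γ δ ε; decide

lemma lin_nonconst (α β δ : Fin 2) (h : ¬(α = 0 ∧ β = 0)) :
    ¬ ∀ x y : Fin 2, (fun x y => α * x + β * y + δ) x y
      = (fun x y => α * x + β * y + δ) 0 0 := by
  revert α β δ; decide

lemma nonconst_witness (f : Fin 2 → Fin 2 → Fin 2) (hf : ¬ ∀ x y, f x y = f 0 0) :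
    ∃ x0 y0 x1 y1, f x0 y0 = 0 ∧ f x1 y1 = 1 := by
  revert f; decide

def Dset : Set Beh := {p | ∃ α β, p = Dfun α β}
def Hset : Set Beh := {p | ∃ f, (¬ ∀ x y, f x y = f 0 0) ∧ p = Hfun f}

lemma main1 : NBTS.extremePoints ℝ = Dset ∪ Hset := by
  ext p
  constructor
  · intro h
    rcases extreme_sub h with h | h
    · exact Or.inl h
    · exact Or.inr h
  · rintro (⟨α, β, rfl⟩ | ⟨f, hf, rfl⟩)
    · exact D_extreme α β
    · obtain ⟨x0, y0, x1, y1, h0, h1⟩ := nonconst_witness f hf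
      exact H_extreme f x0 y0 x1 y1 h0 h1

lemma Hinj : Function.Injective Hfun := by
  intro f g h
  funext x y
  by_contra hne
  have := congrFun (congrFun (congrFun (congrFun h 0) (f x y)) x) y
  simp only [Hfun, zero_add] at this
  rw [if_pos trivial, if_neg hne] at this
  norm_num at this

lemma Dinj : Function.Injective (fun q : Fin 2 × Fin 2 => Dfun q.1 q.2) := by
  rintro ⟨α, β⟩ ⟨α', β'⟩ h
  simp only at h
  have := congrFun (congrFun (congrFun (congrFun h α) β) 0) 0
  simp only [Dfun] at this
  rw [if_pos (⟨trivial, trivial⟩ : True ∧ True)] at this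
  by_cases hc : α = α' ∧ β = β'
  · simp [hc.1, hc.2]
  · rw [if_neg hc] at this
    norm_num at this

lemma DH_disj : Disjoint Dset Hset := by
  rw [Set.disjoint_left]
  rintro p ⟨α, β, rfl⟩ ⟨f, hf, hH⟩
  have := congrFun (congrFun (congrFun (congrFun hH α) β) 0) 0
  simp only [Dfun, Hfun] at this
  rw [if_pos (⟨trivial, trivial⟩ : True ∧ True)] at this
  split at this <;> norm_num at this

lemma Dset_eq : Dset = Set.range (fun q : Fin 2 × Fin 2 => Dfun q.1 q.2) := by
  ext p
  constructor
  · rintro ⟨α, β, rfl⟩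
    exact ⟨(α, β), rfl⟩
  · rintro ⟨⟨α, β⟩, rfl⟩
    exact ⟨α, β, rfl⟩

lemma Hset_eq : Hset = Hfun '' {f | ¬ ∀ x y, f x y = f 0 0} := by
  ext p
  constructor
  · rintro ⟨f, hf, rfl⟩
    exact ⟨f, hf, rfl⟩
  · rintro ⟨f, hf, rfl⟩
    exact ⟨f, hf, rfl⟩

lemma Dset_card : Dset.ncard = 4 := by
  rw [Dset_eq, ← Set.image_univ, Set.ncard_image_of_injective _ Dinj, Set.ncard_univ]
  simp

lemma Hset_card : Hset.ncard = 14 := by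
  rw [Hset_eq, Set.ncard_image_of_injective _ Hinj, Set.ncard_eq_toFinset_card']
  decide

lemma union_card : (Dset ∪ Hset).ncard = 18 := by
  have h1 : Dset.Finite := by
    rw [Dset_eq]
    exact Set.finite_range _
  have h2 : Hset.Finite := by
    rw [Hset_eq]
    exact Set.Finite.image _ (Set.toFinite _)
  rw [Set.ncard_union_eq DH_disj h1 h2, Dset_card, Hset_card]

lemma stmt_eq :
    ({p : Fin 2 → Fin 2 → Fin 2 → Fin 2 → ℝ |
        ∃ α β : Fin 2, p = fun a b _ _ =>
          if a = α ∧ b = β then (1 : ℝ) else 0} ∪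
      {p : Fin 2 → Fin 2 → Fin 2 → Fin 2 → ℝ |
        ∃ γ δ ε : Fin 2, p = fun a b x y =>
          if a + b = (x + γ) * (y + δ) + ε then (1 : ℝ) / 2 else 0} ∪
      {p : Fin 2 → Fin 2 → Fin 2 → Fin 2 → ℝ |
        ∃ α β δ : Fin 2, ¬(α = 0 ∧ β = 0) ∧ p = fun a b x y =>
          if a + b = α * x + β * y + δ then (1 : ℝ) / 2 else 0}) = Dset ∪ Hset := by
  ext p
  simp only [Set.mem_union, Set.mem_setOf_eq]
  constructor
  · rintro ((⟨α, β, rfl⟩ | ⟨γ, δ, ε, rfl⟩) | ⟨α, β, δ, hne, rfl⟩)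
    · exact Or.inl ⟨α, β, rfl⟩
    · exact Or.inr ⟨fun x y => (x + γ) * (y + δ) + ε, PR_nonconst γ δ ε, rfl⟩
    · exact Or.inr ⟨fun x y => α * x + β * y + δ, lin_nonconst α β δ hne, rfl⟩
  · rintro (⟨α, β, rfl⟩ | ⟨f, hf, rfl⟩)
    · exact Or.inl (Or.inl ⟨α, β, rfl⟩)
    · rcases classify f with h | ⟨γ, δ, ε, rfl⟩ | ⟨α, β, δ, hne, rfl⟩
      · exact absurd h hf
      · exact Or.inl (Or.inr ⟨γ, δ, ε, rfl⟩)
      · exact Or.inr ⟨α, β, δ, hne, rfl⟩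

/-- The extreme points of the binary parallel-timing NBTS polytope
are exactly the 4 constant deterministic behaviours, the 8 PR-type behaviours
and the 6 linear-correlation behaviours (18 points in total).
(Here `Fin 2` arithmetic is mod 2.) -/
theorem extremePoints_binary_parallel_nbts_polytope :
    ({p : Fin 2 → Fin 2 → Fin 2 → Fin 2 → ℝ |
        (∀ a b x y, 0 ≤ p a b x y) ∧
        (∀ x y, ∑ a, ∑ b, p a b x y = 1) ∧
        (∀ a x x' y y', ∑ b, p a b x y = ∑ b, p a b x' y') ∧
        (∀ b x x' y y', ∑ a, p a b x y = ∑ a, p a b x' y')}.extremePoints ℝ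
      =
      {p : Fin 2 → Fin 2 → Fin 2 → Fin 2 → ℝ |
        ∃ α β : Fin 2, p = fun a b _ _ =>
          if a = α ∧ b = β then (1 : ℝ) else 0} ∪
      {p : Fin 2 → Fin 2 → Fin 2 → Fin 2 → ℝ |
        ∃ γ δ ε : Fin 2, p = fun a b x y =>
          if a + b = (x + γ) * (y + δ) + ε then (1 : ℝ) / 2 else 0} ∪
      {p : Fin 2 → Fin 2 → Fin 2 → Fin 2 → ℝ |
        ∃ α β δ : Fin 2, ¬(α = 0 ∧ β = 0) ∧ p = fun a b x y =>
          if a + b = α * x + β * y + δ then (1 : ℝ) / 2 else 0})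
    ∧
    ({p : Fin 2 → Fin 2 → Fin 2 → Fin 2 → ℝ |
        ∃ α β : Fin 2, p = fun a b _ _ =>
          if a = α ∧ b = β then (1 : ℝ) else 0} ∪
      {p : Fin 2 → Fin 2 → Fin 2 → Fin 2 → ℝ |
        ∃ γ δ ε : Fin 2, p = fun a b x y =>
          if a + b = (x + γ) * (y + δ) + ε then (1 : ℝ) / 2 else 0} ∪
      {p : Fin 2 → Fin 2 → Fin 2 → Fin 2 → ℝ |
        ∃ α β δ : Fin 2, ¬(α = 0 ∧ β = 0) ∧ p = fun a b x y =>
          if a + b = α * x + β * y + δ then (1 : ℝ) / 2 else 0}).ncard = 18 := by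
  rw [stmt_eq]
  exact ⟨main1, union_card⟩
end

section
/- A binary two-party behaviour p lies in the convex hull of the 8 deterministic behaviours of the form p(a,b|x,y) = 1 iff a = α and b = β·x ⊕ γ (for α, β, γ ∈ {0,1}, ⊕ addition mod 2) if and only if p is nonnegative, normalised, satisfies p(a,b|x,y) = p(a,b|x,0) for all a,b,x,y (independence of y), and ∑_b p(a,b|x,y) = ∑_b p(a,b|x',y) for all a,x,x',y (Alice's marginal is independent of x). Consequently, in the sequential-timing (A before B) scenario the classical polytope is exactly this set. -/
private lemma keyA (u v0 v1 s : ℝ) (hs : v0 + v1 = s) (h0 : s = 0 → u = 0) :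
    ((if s = 0 then (0:ℝ) else u * v0 / s) + (if s = 0 then 0 else u * v1 / s)) = u := by
  by_cases h : s = 0
  · simp [h, h0 h]
  · rw [if_neg h, if_neg h, ← add_div, div_eq_iff h, ← hs]; ring

private lemma keyB (u0 u1 v s : ℝ) (hs : u0 + u1 = s) (h0 : s = 0 → v = 0) :
    ((if s = 0 then (0:ℝ) else u0 * v / s) + (if s = 0 then 0 else u1 * v / s)) = v := by
  by_cases h : s = 0
  · simp [h, h0 h]
  · rw [if_neg h, if_neg h, ← add_div, div_eq_iff h, ← hs]; ring

private lemma keySum (u0 u1 v0 v1 s : ℝ) (hu : u0 + u1 = s) (hv : v0 + v1 = s) :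
    ((if s = 0 then (0:ℝ) else u0 * v0 / s) + (if s = 0 then 0 else u0 * v1 / s)
      + (if s = 0 then 0 else u1 * v0 / s) + (if s = 0 then 0 else u1 * v1 / s)) = s := by
  by_cases h : s = 0
  · simp [h]
  · rw [if_neg h, if_neg h, if_neg h, if_neg h, ← add_div, ← add_div,
      ← add_div, div_eq_iff h]
    linear_combination v0 * hu + v1 * hu + s * hv



/-- A binary behaviour lies in the convex hull of the 8
deterministic behaviours `p(a,b|x,y) = 1` iff `a = α`, `b = β·x ⊕ γ` if and only
if it is nonnegative, normalised, independent of `y`, and Alice's marginal is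
independent of `x`; consequently, in the sequential-timing (A before B) scenario
the classical polytope (behaviours of the form `p(a,b|x,y) = p_A(a)·p_B(b|a,x)`)
is exactly this set. (Here `Fin 2` arithmetic is mod 2.) -/
theorem sequential_classical_polytope_characterisation :
    (∀ p : Fin 2 → Fin 2 → Fin 2 → Fin 2 → ℝ,
      p ∈ convexHull ℝ
        {p : Fin 2 → Fin 2 → Fin 2 → Fin 2 → ℝ |
          ∃ α β γ : Fin 2, p = fun a b x _ =>
            if a = α ∧ b = β * x + γ then (1 : ℝ) else 0}
      ↔
      ((∀ a b x y, 0 ≤ p a b x y) ∧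
       (∀ x y, ∑ a, ∑ b, p a b x y = 1) ∧
       (∀ a b x y, p a b x y = p a b x 0) ∧
       (∀ a x x' y, ∑ b, p a b x y = ∑ b, p a b x' y)))
    ∧
    {p : Fin 2 → Fin 2 → Fin 2 → Fin 2 → ℝ |
      ∃ (pA : Fin 2 → ℝ) (pB : Fin 2 → Fin 2 → Fin 2 → ℝ),
        (∀ a, 0 ≤ pA a) ∧ (∑ a, pA a = 1) ∧
        (∀ b a x, 0 ≤ pB b a x) ∧ (∀ a x, ∑ b, pB b a x = 1) ∧
        (∀ a b x y, p a b x y = pA a * pB b a x)} =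
    {p : Fin 2 → Fin 2 → Fin 2 → Fin 2 → ℝ |
      (∀ a b x y, 0 ≤ p a b x y) ∧
      (∀ x y, ∑ a, ∑ b, p a b x y = 1) ∧
      (∀ a b x y, p a b x y = p a b x 0) ∧
      (∀ a x x' y, ∑ b, p a b x y = ∑ b, p a b x' y)} := by
  constructor
  · intro p
    constructor
    · intro hp
      suffices h : convexHull ℝ
          {p : Fin 2 → Fin 2 → Fin 2 → Fin 2 → ℝ |
              ∃ α β γ : Fin 2, p = fun a b x _ =>
                if a = α ∧ b = β * x + γ then (1 : ℝ) else 0} ⊆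
          {p : Fin 2 → Fin 2 → Fin 2 → Fin 2 → ℝ |
            (∀ a b x y, 0 ≤ p a b x y) ∧
            (∀ x y, ∑ a, ∑ b, p a b x y = 1) ∧
            (∀ a b x y, p a b x y = p a b x 0) ∧
            (∀ a x x' y, ∑ b, p a b x y = ∑ b, p a b x' y)} from h hp
      refine convexHull_min ?_ ?_
      · rintro q ⟨α, β, γ, rfl⟩
        refine ⟨fun a b x y => by positivity, ?_, fun a b x y => rfl, ?_⟩
        · intro x y
          fin_cases x <;> fin_cases α <;> fin_cases β <;> fin_cases γ <;>
            norm_num [Fin.sum_univ_two] <;> decide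
        · intro a x x' y
          fin_cases a <;> fin_cases x <;> fin_cases x' <;> fin_cases α <;> fin_cases β <;>
            fin_cases γ <;> norm_num [Fin.sum_univ_two] <;> decide
      · intro q hq r hr c d hc hd hcd
        refine ⟨?_, ?_, ?_, ?_⟩
        · intro a b x y
          have h1 := hq.1 a b x y
          have h2 := hr.1 a b x y
          simp only [Pi.add_apply, Pi.smul_apply, smul_eq_mul]
          positivity
        · intro x y
          have h1 := hq.2.1 x y
          have h2 := hr.2.1 x y
          simp only [Fin.sum_univ_two, Pi.add_apply, Pi.smul_apply, smul_eq_mul] at h1 h2 ⊢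
          linear_combination c * h1 + d * h2 + hcd
        · intro a b x y
          have h1 := hq.2.2.1 a b x y
          have h2 := hr.2.2.1 a b x y
          simp only [Pi.add_apply, Pi.smul_apply, smul_eq_mul]
          linear_combination c * h1 + d * h2
        · intro a x x' y
          have h1 := hq.2.2.2 a x x' y
          have h2 := hr.2.2.2 a x x' y
          simp only [Fin.sum_univ_two, Pi.add_apply, Pi.smul_apply, smul_eq_mul] at h1 h2 ⊢
          linear_combination c * h1 + d * h2
    · rintro ⟨h1, h2, h3, h4⟩
      set S : Fin 2 → ℝ := fun α => p α 0 0 0 + p α 1 0 0 with hSdef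
      set w : Fin 2 × Fin 2 × Fin 2 → ℝ := fun t =>
        if S t.1 = 0 then 0 else p t.1 t.2.2 0 0 * p t.1 (t.2.1 + t.2.2) 1 0 / S t.1 with hwdef
      set v : Fin 2 × Fin 2 × Fin 2 → (Fin 2 → Fin 2 → Fin 2 → Fin 2 → ℝ) := fun t =>
        fun a b x _ => if a = t.1 ∧ b = t.2.1 * x + t.2.2 then (1 : ℝ) else 0 with hvdef
      -- basic facts
      have hSx : ∀ a x, p a 0 x 0 + p a 1 x 0 = S a := by
        intro a x
        have := h4 a x 0 0
        simp only [Fin.sum_univ_two] at this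
        rw [this]
      have hS0 : ∀ a x, S a = 0 → ∀ b, p a b x 0 = 0 := by
        intro a x hS b
        have hsum := hSx a x
        rw [hS] at hsum
        have h0 := h1 a 0 x 0
        have hb1 := h1 a 1 x 0
        have e0 : p a 0 x 0 = 0 := by linarith
        have e1 : p a 1 x 0 = 0 := by linarith
        fin_cases b
        · exact e0
        · exact e1
      have hrep : p = ∑ t : Fin 2 × Fin 2 × Fin 2, w t • v t := by
        funext a b x y
        rw [h3 a b x y]
        have expand : (∑ t : Fin 2 × Fin 2 × Fin 2, w t • v t) a b x y
            = ∑ t : Fin 2 × Fin 2 × Fin 2, w t * v t a b x y := by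
          simp [Finset.sum_apply]
        rw [expand]
        simp only [Fintype.sum_prod_type]
        simp only [Fin.sum_univ_two, hwdef, hvdef]
        fin_cases a <;> fin_cases b <;> fin_cases x
        · norm_num
          try simp only [show (2:Fin 2) = 0 from rfl, Fin.one_eq_zero_iff, OfNat.ofNat_ne_one, if_false, add_zero, Nat.reduceEqDiff]
          exact (keyA (p 0 0 0 0) (p 0 0 1 0) (p 0 1 1 0) (S 0) (hSx 0 1)
            (fun h => hS0 0 0 h 0)).symm
        · norm_num
          try simp only [show (2:Fin 2) = 0 from rfl, Fin.one_eq_zero_iff, OfNat.ofNat_ne_one, if_false, add_zero, Nat.reduceEqDiff]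
          exact (keyB (p 0 0 0 0) (p 0 1 0 0) (p 0 0 1 0) (S 0) (hSx 0 0)
            (fun h => hS0 0 1 h 0)).symm
        · norm_num
          try simp only [show (2:Fin 2) = 0 from rfl, Fin.one_eq_zero_iff, OfNat.ofNat_ne_one, if_false, add_zero, Nat.reduceEqDiff]
          exact (keyA (p 0 1 0 0) (p 0 1 1 0) (p 0 0 1 0) (S 0) (by linarith [hSx (0:Fin 2) 1])
            (fun h => hS0 0 0 h 1)).symm
        · norm_num
          try simp only [show (2:Fin 2) = 0 from rfl, Fin.one_eq_zero_iff, OfNat.ofNat_ne_one, if_false, add_zero, Nat.reduceEqDiff]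
          exact (keyB (p 0 1 0 0) (p 0 0 0 0) (p 0 1 1 0) (S 0) (by linarith [hSx (0:Fin 2) 0])
            (fun h => hS0 0 1 h 1)).symm
        · norm_num
          try simp only [show (2:Fin 2) = 0 from rfl, Fin.one_eq_zero_iff, OfNat.ofNat_ne_one, if_false, add_zero, Nat.reduceEqDiff]
          exact (keyA (p 1 0 0 0) (p 1 0 1 0) (p 1 1 1 0) (S 1) (hSx 1 1)
            (fun h => hS0 1 0 h 0)).symm
        · norm_num
          try simp only [show (2:Fin 2) = 0 from rfl, Fin.one_eq_zero_iff, OfNat.ofNat_ne_one, if_false, add_zero, Nat.reduceEqDiff]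
          exact (keyB (p 1 0 0 0) (p 1 1 0 0) (p 1 0 1 0) (S 1) (hSx 1 0)
            (fun h => hS0 1 1 h 0)).symm
        · norm_num
          try simp only [show (2:Fin 2) = 0 from rfl, Fin.one_eq_zero_iff, OfNat.ofNat_ne_one, if_false, add_zero, Nat.reduceEqDiff]
          exact (keyA (p 1 1 0 0) (p 1 1 1 0) (p 1 0 1 0) (S 1) (by linarith [hSx (1:Fin 2) 1])
            (fun h => hS0 1 0 h 1)).symm
        · norm_num
          try simp only [show (2:Fin 2) = 0 from rfl, Fin.one_eq_zero_iff, OfNat.ofNat_ne_one, if_false, add_zero, Nat.reduceEqDiff]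
          exact (keyB (p 1 1 0 0) (p 1 0 0 0) (p 1 1 1 0) (S 1) (by linarith [hSx (1:Fin 2) 0])
            (fun h => hS0 1 1 h 1)).symm
      have hwnn : ∀ t, 0 ≤ w t := by
        intro t
        rw [hwdef]
        dsimp only
        split_ifs with h
        · exact le_refl 0
        · exact div_nonneg (mul_nonneg (h1 _ _ _ _) (h1 _ _ _ _))
            (add_nonneg (h1 t.1 0 0 0) (h1 t.1 1 0 0))
      have hwsum : ∑ t : Fin 2 × Fin 2 × Fin 2, w t = 1 := by
        have k0 := keySum (p 0 0 0 0) (p 0 1 0 0) (p 0 0 1 0) (p 0 1 1 0) (S 0) (hSx 0 0) (hSx 0 1)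
        have k1 := keySum (p 1 0 0 0) (p 1 1 0 0) (p 1 0 1 0) (p 1 1 1 0) (S 1) (hSx 1 0) (hSx 1 1)
        have hn := h2 0 0
        simp only [Fin.sum_univ_two] at hn
        have hs0 : S 0 = p 0 0 0 0 + p 0 1 0 0 := rfl
        have hs1 : S 1 = p 1 0 0 0 + p 1 1 0 0 := rfl
        simp only [hwdef, Fintype.sum_prod_type, Fin.sum_univ_two]
        norm_num
        try simp only [show (2:Fin 2) = 0 from rfl, Fin.one_eq_zero_iff, OfNat.ofNat_ne_one, if_false, add_zero, Nat.reduceEqDiff]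
        simp only [show (1 + 1 : Fin 2) = 0 from rfl]
        linarith [k0, k1]
      rw [hrep]
      exact (convex_convexHull ℝ _).sum_mem (fun i _ => hwnn i) hwsum
        (fun i _ => subset_convexHull ℝ _ ⟨i.1, i.2.1, i.2.2, rfl⟩)
  ·
    ext p
    simp only [Set.mem_setOf_eq]
    constructor
    · rintro ⟨pA, pB, hA0, hA1, hB0, hB1, hrep⟩
      refine ⟨?_, ?_, ?_, ?_⟩
      · intro a b x y; rw [hrep]; exact mul_nonneg (hA0 a) (hB0 b a x)
      · intro x y
        have : ∀ a, ∑ b, p a b x y = pA a := by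
          intro a
          simp only [Fin.sum_univ_two, hrep]
          have := hB1 a x
          simp only [Fin.sum_univ_two] at this
          linear_combination pA a * this
        simp only [Fin.sum_univ_two] at this ⊢
        have h0 := this 0; have h1 := this 1
        have := hA1
        simp only [Fin.sum_univ_two] at this
        linarith
      · intro a b x y; rw [hrep, hrep]
      · intro a x x' y
        have key : ∀ x'', ∑ b, p a b x'' y = pA a := by
          intro x''
          simp only [Fin.sum_univ_two, hrep]
          have := hB1 a x''
          simp only [Fin.sum_univ_two] at this
          linear_combination pA a * this
        rw [key x, key x']
    · rintro ⟨h1, h2, h3, h4⟩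
      refine ⟨fun a => ∑ b, p a b 0 0,
        fun b a x => if (∑ b', p a b' 0 0) = 0 then (if b = 0 then 1 else 0)
          else p a b x 0 / (∑ b', p a b' 0 0), ?_, ?_, ?_, ?_, ?_⟩
      · intro a; exact Finset.sum_nonneg fun b _ => h1 a b 0 0
      · simpa using h2 0 0
      · intro b a x
        dsimp only
        split_ifs with h h'
        · exact zero_le_one
        · exact le_refl 0
        · exact div_nonneg (h1 a b x 0) (Finset.sum_nonneg fun b _ => h1 a b 0 0)
      · intro a x
        dsimp only
        simp only [Fin.sum_univ_two]
        by_cases h : p a 0 0 0 + p a 1 0 0 = 0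
        · simp [h]
        · have hm := h4 a x 0 0
          simp only [Fin.sum_univ_two] at hm
          rw [if_neg h, if_neg h, ← add_div, hm, div_self h]
      · intro a b x y
        rw [h3 a b x y]
        dsimp only
        simp only [Fin.sum_univ_two]
        by_cases h : p a 0 0 0 + p a 1 0 0 = 0
        · have hm := h4 a x 0 0
          simp only [Fin.sum_univ_two] at hm
          rw [h] at hm
          have e0 : p a 0 x 0 = 0 := by linarith [h1 a 0 x 0, h1 a 1 x 0]
          have e1 : p a 1 x 0 = 0 := by linarith [h1 a 0 x 0, h1 a 1 x 0]
          rw [if_pos h, h, zero_mul]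
          fin_cases b
          · exact e0
          · exact e1
        · rw [if_neg h]
          field_simp
end
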